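/- If a word α is a concatenation of blocks each of which is either [0] or [m,m] with m ≠ 0, then the number k of nonzero letters of α is even, and EJ α t = (1/2)^(k/2) · t^q / q! where q = k/2 + z and z is the number of zeros in α. -/

import Mathlib

open intervalIntegral

noncomputable def EJrev : List ℕ → ℝ → ℝ
  | [], _ => 1
  | [a], t => if a = 0 then ∫ s in (0:ℝ)..t, EJrev [] s else 0
  | a :: b :: rest, t =>
      if a = 0 then ∫ s in (0:ℝ)..t, EJrev (b :: rest) s
      else if b = a then (1/2) * ∫ s in (0:ℝ)..t, EJrev rest s
      else 0

/-- Expectation of the Stratonovich iterated integral `J_α(t)`, defined by the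
recursion on the last letter of the word. -/
noncomputable def EJ (α : List ℕ) (t : ℝ) : ℝ := EJrev α.reverse t

/-- A block is `[0]` or `[m,m]` with `m ≠ 0`. -/
def IsBlock (b : List ℕ) : Prop := b = [0] ∨ ∃ m : ℕ, m ≠ 0 ∧ b = [m, m]

/-- A word is admissible if it is a concatenation of blocks. -/
def Admissible (α : List ℕ) : Prop :=
  ∃ L : List (List ℕ), (∀ b ∈ L, IsBlock b) ∧ L.flatten = α

lemma EJrev_zero_cons (rest : List ℕ) (t : ℝ) :
    EJrev (0 :: rest) t = ∫ s in (0:ℝ)..t, EJrev rest s := by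
  cases rest <;> simp [EJrev]

lemma EJrev_pair {m : ℕ} (hm : m ≠ 0) (rest : List ℕ) (t : ℝ) :
    EJrev (m :: m :: rest) t = (1/2) * ∫ s in (0:ℝ)..t, EJrev rest s := by
  simp [EJrev, hm]

lemma integ (c : ℝ) (n : ℕ) :
    ∀ t : ℝ, (∫ s in (0:ℝ)..t, c * s ^ n / (Nat.factorial n)) =
      c * t ^ (n+1) / (Nat.factorial (n+1)) := by
  intro t
  have : (∫ s in (0:ℝ)..t, c * s ^ n / (Nat.factorial n)) =
      (c / (Nat.factorial n)) * ∫ s in (0:ℝ)..t, s ^ n := by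
    rw [← intervalIntegral.integral_const_mul]
    congr 1; ext s; ring
  have h1 : (Nat.factorial n : ℝ) ≠ 0 := Nat.cast_ne_zero.2 (Nat.factorial_ne_zero n)
  have h2 : ((n:ℝ) + 1) ≠ 0 := by positivity
  rw [this, integral_pow, Nat.factorial_succ]
  rw [zero_pow (Nat.succ_ne_zero n), sub_zero]
  push_cast
  rw [div_mul_div_comm, mul_comm ((Nat.factorial n : ℝ))]

lemma key (L : List (List ℕ)) (hL : ∀ b ∈ L, IsBlock b) :
    ∀ t : ℝ, EJrev L.flatten t =
      (1/2 : ℝ) ^ (L.countP (· ≠ [0])) * t ^ L.length / (Nat.factorial L.length) := by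
  induction L with
  | nil => intro t; simp [EJrev]
  | cons b L ih =>
    have hb := hL b (by simp)
    have ihL := ih (fun b hb => hL b (by simp [hb]))
    intro t
    rcases hb with rfl | ⟨m, hm, rfl⟩
    · simp only [List.flatten_cons, List.singleton_append]
      rw [EJrev_zero_cons]
      have : (∫ s in (0:ℝ)..t, EJrev L.flatten s) =
          ∫ s in (0:ℝ)..t, (1/2 : ℝ) ^ (L.countP (· ≠ [0])) * s ^ L.length / (Nat.factorial L.length) := by
        congr 1; ext s; exact ihL s
      rw [this, integ]
      simp [List.countP_cons]
    · simp only [List.flatten_cons, List.cons_append, List.nil_append]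
      rw [EJrev_pair hm]
      have : (∫ s in (0:ℝ)..t, EJrev L.flatten s) =
          ∫ s in (0:ℝ)..t, (1/2 : ℝ) ^ (L.countP (· ≠ [0])) * s ^ L.length / (Nat.factorial L.length) := by
        congr 1; ext s; exact ihL s
      rw [this, integ]
      have hcp : List.countP (· ≠ [0]) ([m,m] :: L) = List.countP (· ≠ [0]) L + 1 := by
        simp [List.countP_cons]
      rw [hcp, pow_succ, List.length_cons]
      ring

lemma counts (L : List (List ℕ)) (hL : ∀ b ∈ L, IsBlock b) :
    (L.flatten.filter (· ≠ 0)).length = 2 * L.countP (· ≠ [0]) ∧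
    L.flatten.count 0 = L.countP (· = [0]) ∧
    L.countP (· ≠ [0]) + L.countP (· = [0]) = L.length := by
  induction L with
  | nil => simp
  | cons b L ih =>
    obtain ⟨h1, h2, h3⟩ := ih (fun x hx => hL x (List.mem_cons_of_mem _ hx))
    rcases hL b (List.mem_cons_self) with rfl | ⟨m, hm, rfl⟩
    · refine ⟨?_, ?_, ?_⟩
      · rw [List.flatten_cons, List.filter_append, List.length_append,
          List.countP_cons, h1]
        norm_num
      · rw [List.flatten_cons, List.count_append, List.countP_cons, h2]
        norm_num
        omega
      · simp only [List.countP_cons, List.length_cons]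
        norm_num
        simp only [ne_eq, decide_not] at h3
        omega
    · refine ⟨?_, ?_, ?_⟩
      · rw [List.flatten_cons, List.filter_append, List.length_append,
          List.countP_cons, h1]
        have : List.filter (fun x => decide (x ≠ 0)) [m, m] = [m, m] := by
          simp [hm]
        rw [this]
        norm_num
        ring
      · rw [List.flatten_cons, List.count_append, List.countP_cons, h2]
        have : List.count 0 [m, m] = 0 := by
          rw [List.count_eq_zero]; simp [Ne.symm hm]
        rw [this]
        norm_num [hm]
      · simp only [List.countP_cons, List.length_cons]
        norm_num [hm]
        simp only [ne_eq, decide_not] at h3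
        omega

lemma rev_flatten (L : List (List ℕ)) (hL : ∀ b ∈ L, IsBlock b) :
    L.flatten.reverse = L.reverse.flatten := by
  induction L with
  | nil => simp
  | cons b L ih =>
    have hb : b.reverse = b := by
      rcases hL b (List.mem_cons_self) with rfl | ⟨m, hm, rfl⟩ <;> simp
    simp [ih (fun x hx => hL x (List.mem_cons_of_mem _ hx)), hb]

example (L : List (List ℕ)) : L.reverse.countP (· ≠ [0]) = L.countP (· ≠ [0]) := by
  exact List.countP_reverse


theorem stmt2 (α : List ℕ) (h : Admissible α) :
    Even (α.filter (· ≠ 0)).length ∧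
    ∀ t : ℝ,
      EJ α t = (1/2 : ℝ) ^ ((α.filter (· ≠ 0)).length / 2) *
        t ^ ((α.filter (· ≠ 0)).length / 2 + α.count 0) /
        (Nat.factorial ((α.filter (· ≠ 0)).length / 2 + α.count 0)) := by
  obtain ⟨L, hL, rfl⟩ := h
  obtain ⟨h1, h2, h3⟩ := counts L hL
  refine ⟨by rw [h1]; exact even_two_mul _, fun t => ?_⟩
  have hq : (L.flatten.filter (· ≠ 0)).length / 2 = L.countP (· ≠ [0]) := by omega
  rw [hq, h2]
  unfold EJ
  rw [rev_flatten L hL, key L.reverse (fun b hb => hL b (List.mem_reverse.1 hb)) t,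
    List.countP_reverse, List.length_reverse, ← h3]
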